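/- Fix n, m, κ ∈ ℕ with 4κ ≤ n, parameters ε̄, δ̄ ≥ 0, and an algorithm A : Z^{(n−4κ)·m} → PMF(O). Let x, x' ∈ Z^{n·m} be user-level neighbors and let r ∈ ℕ with r + 1 ≤ 4κ. If X^r_stable(x') ≠ ∅, then X^{r+1}_stable(x) ≠ ∅. -/
import Mathlib


open scoped BigOperators Classical

noncomputable section

/-- The `e^ε`-hockey-stick divergence between pmfs on a finite type. -/
def hsDiv {O : Type} [Fintype O] (ε : ℝ) (P Q : O → ℝ) : ℝ :=
  ∑ o, max (P o - Real.exp ε * Q o) 0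

/-- `P ≈_{ε,δ} Q`: both hockey-stick divergences are at most `δ`. -/
def Indis {O : Type} [Fintype O] (ε δ : ℝ) (P Q : O → ℝ) : Prop :=
  hsDiv ε P Q ≤ δ ∧ hsDiv ε Q P ≤ δ

/-- User-level neighbors: the two inputs agree on all user blocks except possibly one. -/
def UserNeighbor {Z : Type} {n m : ℕ} (x x' : Fin n → Fin m → Z) : Prop :=
  ∃ i, ∀ j, j ≠ i → x j = x' j

/-- Delete the blocks of the users in `T` (assumed of cardinality `k`) from `x`,
keeping the remaining blocks in order. -/
noncomputable def deleteUsers {Z : Type} [Nonempty Z] {n m : ℕ} (k : ℕ)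
    (x : Fin n → Fin m → Z) (T : Finset (Fin n)) : Fin (n - k) → Fin m → Z :=
  if h : T.card = k then
    fun i j => x ((Tᶜ.orderIsoOfFin
      (by rw [Finset.card_compl, h, Fintype.card_fin]) i).1) j
  else fun _ _ => Classical.arbitrary Z

/-- `A` is `(4κ - |S|, ε̄, δ̄)`-local-deletion DP at `x_{-S}`: deleting any further
`4κ - |S|` user blocks of `x_{-S}` (i.e., passing from `S` to any superset `T` of
cardinality `4κ`) yields `(ε̄,δ̄)`-indistinguishable outputs. -/
def LDDPDel {Z O : Type} [Fintype O] [Nonempty Z] {n m : ℕ} (κ : ℕ)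
    (A : (Fin (n - 4 * κ) → Fin m → Z) → O → ℝ) (εb δb : ℝ)
    (x : Fin n → Fin m → Z) (S : Finset (Fin n)) : Prop :=
  ∀ T T' : Finset (Fin n), S ⊆ T → S ⊆ T' → T.card = 4 * κ → T'.card = 4 * κ →
    Indis εb δb (A (deleteUsers (4 * κ) x T)) (A (deleteUsers (4 * κ) x T'))

/-- `X^r_stable(x) = {S ⊆ [n] : |S| = r ∧ A is (4κ - r, ε̄, δ̄)-LDDP at x_{-S}}`. -/
def stableSet {Z O : Type} [Fintype O] [Nonempty Z] {n m : ℕ} (κ : ℕ)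
    (A : (Fin (n - 4 * κ) → Fin m → Z) → O → ℝ) (εb δb : ℝ) (r : ℕ)
    (x : Fin n → Fin m → Z) : Set (Finset (Fin n)) :=
  {S | S.card = r ∧ LDDPDel κ A εb δb x S}

lemma deleteUsers_congr {Z : Type} [Nonempty Z] {n m : ℕ} (k : ℕ)
    (x x' : Fin n → Fin m → Z) (T : Finset (Fin n)) (i : Fin n)
    (hi : i ∈ T) (h : ∀ j, j ≠ i → x j = x' j) :
    deleteUsers k x T = deleteUsers k x' T := by
  unfold deleteUsers
  split_ifs with hc
  · funext a b
    have hmem := ((Tᶜ.orderIsoOfFin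
      (by rw [Finset.card_compl, hc, Fintype.card_fin])) a).2
    have hne : (((Tᶜ.orderIsoOfFin
        (by rw [Finset.card_compl, hc, Fintype.card_fin])) a) : Fin n) ≠ i := by
      intro he
      exact (Finset.mem_compl.mp hmem) (he ▸ hi)
    rw [h _ hne]
  · rfl

/-- If `x, x'` are user-level neighbors and `X^r_stable(x') ≠ ∅`,
then `X^{r+1}_stable(x) ≠ ∅`. -/
theorem stable_set_neighbors {Z O : Type} [Fintype O] [Nonempty Z]
    (n m κ : ℕ) (hκn : 4 * κ ≤ n) (εb δb : ℝ) (hεb : 0 ≤ εb) (hδb : 0 ≤ δb)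
    (A : (Fin (n - 4 * κ) → Fin m → Z) → O → ℝ)
    (x x' : Fin n → Fin m → Z) (hxx : UserNeighbor x x')
    (r : ℕ) (hr : r + 1 ≤ 4 * κ)
    (hne : (stableSet κ A εb δb r x').Nonempty) :
    (stableSet κ A εb δb (r + 1) x).Nonempty := by
  obtain ⟨i, hi⟩ := hxx
  obtain ⟨S, hScard, hSld⟩ := hne
  have hrn : r < n := lt_of_lt_of_le (Nat.lt_succ_self r) (le_trans hr hκn)
  obtain ⟨S', hSS', hiS', hS'card⟩ :
      ∃ S' : Finset (Fin n), S ⊆ S' ∧ i ∈ S' ∧ S'.card = r + 1 := by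
    by_cases hiS : i ∈ S
    · have hcompl : Sᶜ.Nonempty := by
        rw [← Finset.card_pos, Finset.card_compl, hScard, Fintype.card_fin]
        omega
      obtain ⟨j, hj⟩ := hcompl
      have hjS : j ∉ S := Finset.mem_compl.mp hj
      exact ⟨insert j S, Finset.subset_insert _ _,
        Finset.mem_insert_of_mem hiS,
        by rw [Finset.card_insert_of_notMem hjS, hScard]⟩
    · exact ⟨insert i S, Finset.subset_insert _ _, Finset.mem_insert_self _ _,
        by rw [Finset.card_insert_of_notMem hiS, hScard]⟩
  refine ⟨S', hS'card, ?_⟩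
  intro T T' hT hT' hcT hcT'
  rw [deleteUsers_congr _ x x' T i (hT hiS') hi,
    deleteUsers_congr _ x x' T' i (hT' hiS') hi]
  exact hSld T T' (hSS'.trans hT) (hSS'.trans hT') hcT hcT'
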